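/- Fix β_0 > 0, δ ∈ (0,1), and an integer K ≥ 1. Define β_t = β_0(t+1)^δ if t is a multiple of K, and β_t = β_0(nK+1)^δ if nK < t < (n+1)K for a nonnegative integer n. Then with α_0 = β_0 K^{−δ}, γ_0 = β_0, and η_0 = β_0 δ K^{2−δ}: (i) α_0 (t+1)^δ ≤ β_t ≤ γ_0 (t+1)^δ for all t ≥ 0; (ii) 0 ≤ β_t − β_{t−1} ≤ η_0 t^{δ−1} for all t ≥ 1. -/

import Mathlib

open Real

theorem stmt_2 (β₀ δ : ℝ) (hβ₀ : 0 < β₀) (hδ : δ ∈ Set.Ioo (0 : ℝ) 1)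
    (K : ℕ) (hK : 1 ≤ K) (β : ℕ → ℝ)
    (hmul : ∀ t : ℕ, K ∣ t → β t = β₀ * ((t : ℝ) + 1) ^ δ)
    (hbetween : ∀ t n : ℕ, n * K < t → t < (n + 1) * K →
      β t = β₀ * ((n * K : ℕ) + 1 : ℝ) ^ δ) :
    (∀ t : ℕ, β₀ * (K : ℝ) ^ (-δ) * ((t : ℝ) + 1) ^ δ ≤ β t ∧
      β t ≤ β₀ * ((t : ℝ) + 1) ^ δ) ∧
    (∀ t : ℕ, 1 ≤ t →
      0 ≤ β t - β (t - 1) ∧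
      β t - β (t - 1) ≤ β₀ * δ * (K : ℝ) ^ (2 - δ) * (t : ℝ) ^ (δ - 1)) := by
  obtain ⟨hδ0, hδ1⟩ := hδ
  have hK0 : (0:ℝ) < K := by exact_mod_cast hK
  have hK1 : (1:ℝ) ≤ K := by exact_mod_cast hK
  -- uniform formula
  have hform : ∀ t : ℕ, β t = β₀ * (((t / K) * K : ℕ) + 1 : ℝ) ^ δ := by
    intro t
    by_cases hd : K ∣ t
    · rw [Nat.div_mul_cancel hd]
      exact hmul t hd
    · have h2 : t % K + K * (t / K) = t := Nat.mod_add_div t K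
      have h3 : t % K < K := Nat.mod_lt t (by omega)
      have h4 : t % K ≠ 0 := fun h => hd (Nat.dvd_of_mod_eq_zero h)
      have h5 : t / K * K = K * (t / K) := Nat.mul_comm _ _
      have h6 : (t / K + 1) * K = K * (t / K) + K := by ring
      exact hbetween t (t / K) (by omega) (by omega)
  -- Bernoulli step
  have key : ∀ a b : ℝ, 1 ≤ b → b ≤ a → a ^ δ - b ^ δ ≤ δ * (a - b) * b ^ (δ - 1) := by
    intro a b hb hba
    have hb0 : (0:ℝ) < b := by linarith
    have hs : (-1:ℝ) ≤ (a - b) / b := by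
      have : (0:ℝ) ≤ (a - b) / b := div_nonneg (by linarith) hb0.le
      linarith
    have h2 : (1 + (a - b) / b) ^ δ ≤ 1 + δ * ((a - b) / b) :=
      rpow_one_add_le_one_add_mul_self hs hδ0.le hδ1.le
    have ha : a = b * (1 + (a - b) / b) := by field_simp; ring
    have h3 : a ^ δ = b ^ δ * (1 + (a - b) / b) ^ δ := by
      conv_lhs => rw [ha]
      rw [Real.mul_rpow hb0.le (by linarith)]
    have h4 : b ^ δ * (1 + δ * ((a - b) / b)) = b ^ δ + δ * (a - b) * b ^ (δ - 1) := by
      rw [Real.rpow_sub hb0, Real.rpow_one]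
      field_simp
    have h5 : b ^ δ * (1 + (a - b) / b) ^ δ ≤ b ^ δ * (1 + δ * ((a - b) / b)) :=
      mul_le_mul_of_nonneg_left h2 (by positivity)
    linarith [h3 ▸ h5, h4 ▸ h5]
  constructor
  · intro t
    set n := t / K with hn
    have hle : n * K ≤ t := Nat.div_mul_le_self t K
    have hlt : t < (n + 1) * K := by
      have h2 : t % K + K * (t / K) = t := Nat.mod_add_div t K
      have h3 : t % K < K := Nat.mod_lt t (by omega)
      have h6 : (n + 1) * K = K * (t / K) + K := by rw [hn]; ring
      omega
    have hr : β t = β₀ * ((n * K : ℕ) + 1 : ℝ) ^ δ := hform t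
    have hcast : ((n * K : ℕ) : ℝ) = (n : ℝ) * K := by push_cast; ring
    constructor
    · -- lower bound
      rw [hr]
      have h1 : ((t : ℝ) + 1) / K ≤ ((n * K : ℕ) : ℝ) + 1 := by
        rw [hcast, div_le_iff₀ hK0]
        have : (t : ℝ) + 1 ≤ ((n : ℝ) + 1) * K := by exact_mod_cast Nat.succ_le_of_lt hlt
        nlinarith
      have h2 : (((t : ℝ) + 1) / K) ^ δ ≤ (((n * K : ℕ) : ℝ) + 1) ^ δ :=
        Real.rpow_le_rpow (by positivity) h1 hδ0.le
      have h3 : (((t : ℝ) + 1) / K) ^ δ = ((t : ℝ) + 1) ^ δ * (K : ℝ) ^ (-δ) := by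
        rw [Real.div_rpow (by positivity) hK0.le, Real.rpow_neg hK0.le, div_eq_mul_inv]
      calc β₀ * (K : ℝ) ^ (-δ) * ((t : ℝ) + 1) ^ δ
          = β₀ * (((t : ℝ) + 1) / K) ^ δ := by rw [h3]; ring
        _ ≤ β₀ * (((n * K : ℕ) : ℝ) + 1) ^ δ := by
            exact mul_le_mul_of_nonneg_left h2 hβ₀.le
    · rw [hr]
      refine mul_le_mul_of_nonneg_left (Real.rpow_le_rpow (by positivity) ?_ hδ0.le) hβ₀.le
      have : ((n * K : ℕ) : ℝ) ≤ (t : ℝ) := by exact_mod_cast hle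
      linarith
  · intro t ht
    by_cases hd : K ∣ t
    · -- t = K * (m' + 1)
      obtain ⟨m, hm⟩ := hd
      have hm1 : 1 ≤ m := by
        rcases Nat.eq_zero_or_pos m with h | h
        · subst h; simp at hm; omega
        · exact h
      obtain ⟨m', rfl⟩ : ∃ m', m = m' + 1 := ⟨m - 1, by omega⟩
      have hβt : β t = β₀ * ((t : ℝ) + 1) ^ δ := hmul t ⟨m' + 1, hm⟩
      have hdiv : (t - 1) / K = m' := by
        have e2 : K * (m' + 1) = m' * K + K := by ring
        have e4 : (m' + 1) * K = m' * K + K := by ring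
        apply Nat.div_eq_of_lt_le <;> omega
      have hβt1 : β (t - 1) = β₀ * ((m' * K : ℕ) + 1 : ℝ) ^ δ := by
        rw [hform (t - 1), hdiv]
      set b : ℝ := ((m' * K : ℕ) : ℝ) + 1 with hbdef
      have hb1 : (1:ℝ) ≤ b := by
        rw [hbdef]
        have : (0:ℝ) ≤ ((m' * K : ℕ) : ℝ) := Nat.cast_nonneg _
        linarith
      have hcb : b = (m' : ℝ) * K + 1 := by rw [hbdef]; push_cast; ring
      have hca : (t : ℝ) = ((m' : ℝ) + 1) * K := by rw [hm]; push_cast; ring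
      have hM0 : (0:ℝ) ≤ (m' : ℝ) := Nat.cast_nonneg _
      have hba : b ≤ (t : ℝ) + 1 := by rw [hcb, hca]; nlinarith
      have habsub : ((t : ℝ) + 1) - b = K := by rw [hcb, hca]; ring
      have hdiff : β t - β (t - 1) = β₀ * (((t : ℝ) + 1) ^ δ - b ^ δ) := by
        rw [hβt, hβt1]; ring
      constructor
      · rw [hdiff]
        have : b ^ δ ≤ ((t : ℝ) + 1) ^ δ := Real.rpow_le_rpow (by linarith) hba hδ0.le
        nlinarith
      · rw [hdiff]
        have h1 : ((t : ℝ) + 1) ^ δ - b ^ δ ≤ δ * K * b ^ (δ - 1) := by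
          have := key ((t : ℝ) + 1) b hb1 hba
          rw [habsub] at this
          exact this
        have ht1 : (1:ℝ) ≤ (t : ℝ) := by exact_mod_cast ht
        have htKb : (t : ℝ) ≤ K * b := by rw [hcb, hca]; nlinarith
        have h2 : (t : ℝ) ^ (1 - δ) ≤ (K : ℝ) ^ (1 - δ) * b ^ (1 - δ) := by
          rw [← Real.mul_rpow hK0.le (by linarith)]
          exact Real.rpow_le_rpow (by linarith) htKb (by linarith)
        have h3 : b ^ (δ - 1) ≤ (K : ℝ) ^ (1 - δ) * (t : ℝ) ^ (δ - 1) := by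
          have e1 : b ^ (δ - 1) = 1 / b ^ (1 - δ) := by
            rw [one_div, ← Real.rpow_neg (by linarith : (0:ℝ) ≤ b), neg_sub]
          have e2 : (t : ℝ) ^ (δ - 1) = 1 / (t : ℝ) ^ (1 - δ) := by
            rw [one_div, ← Real.rpow_neg (by linarith : (0:ℝ) ≤ (t:ℝ)), neg_sub]
          rw [e1, e2, mul_one_div, div_le_div_iff₀ (by positivity) (by positivity)]
          linarith
        have h4 : (K : ℝ) ^ (2 - δ) = K * (K : ℝ) ^ (1 - δ) := by
          rw [show (2:ℝ) - δ = 1 + (1 - δ) by ring, Real.rpow_add hK0, Real.rpow_one]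
        have h5 : δ * K * b ^ (δ - 1) ≤ δ * ((K : ℝ) ^ (2 - δ) * (t : ℝ) ^ (δ - 1)) := by
          rw [h4]
          have := mul_le_mul_of_nonneg_left h3 (by positivity : (0:ℝ) ≤ δ * K)
          calc δ * K * b ^ (δ - 1) ≤ δ * K * ((K : ℝ) ^ (1 - δ) * (t : ℝ) ^ (δ - 1)) := this
            _ = δ * (K * (K : ℝ) ^ (1 - δ) * (t : ℝ) ^ (δ - 1)) := by ring
        calc β₀ * (((t : ℝ) + 1) ^ δ - b ^ δ) ≤ β₀ * (δ * K * b ^ (δ - 1)) :=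
              mul_le_mul_of_nonneg_left h1 hβ₀.le
          _ ≤ β₀ * (δ * ((K : ℝ) ^ (2 - δ) * (t : ℝ) ^ (δ - 1))) :=
              mul_le_mul_of_nonneg_left h5 hβ₀.le
          _ = β₀ * δ * (K : ℝ) ^ (2 - δ) * (t : ℝ) ^ (δ - 1) := by ring
    · -- same block: β t = β (t - 1)
      have hdivs : t / K = (t - 1) / K := by
        have h1 : t - 1 + 1 = t := by omega
        have := Nat.succ_div (a := t - 1) (b := K)
        rw [h1] at this
        rw [this, if_neg hd]
        omega
      have heq : β t = β (t - 1) := by rw [hform t, hform (t - 1), hdivs]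
      rw [heq, sub_self]
      have ht1 : (0:ℝ) < (t : ℝ) := by exact_mod_cast ht
      refine ⟨le_refl 0, ?_⟩
      positivity
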